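/- Reconstruction of an element of a formal reproducing kernel Hilbert space from its coefficients: let F be a finite-dimensional complex Hilbert space and let (H, (π_n)_{n ∈ ℤ^d}) be coefficient data of a formal reproducing kernel Hilbert space with coefficient space F, with (π_n) separating. For L ∈ ℕ set Λ_L := {ℓ ∈ ℤ^d : |ℓ| ≤ L}, H_L := ⋂_{ℓ ∈ Λ_L} ker π_ℓ, and let P_L be the orthogonal projection of H onto the orthogonal complement of H_L. Then: (i) the orthogonal complement of H_L equals the linear span of {π_ℓ^* u : ℓ ∈ Λ_L, u ∈ F} (this span is finite-dimensional, hence closed); (ii) for every f ∈ H, ‖P_L f − f‖ → 0 as L → ∞; (iii) for every f ∈ H and every L there exists a family (u_ℓ)_{ℓ ∈ Λ_L} in F such that π_{ℓ'} f = Σ_{ℓ ∈ Λ_L} π_{ℓ'} π_ℓ^* u_ℓ for all ℓ' ∈ Λ_L, and for every such family P_L f = Σ_{ℓ ∈ Λ_L} π_ℓ^* u_ℓ. -/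

import Mathlib

open ContinuousLinearMap Filter

/-- The finite "ball" `{ℓ ∈ ℤ^d : |ℓ₁| + ⋯ + |ℓ_d| ≤ L}`. -/
noncomputable def intBall (d L : ℕ) : Finset (Fin d → ℤ) :=
  (Finset.Icc (fun _ => -(L : ℤ)) fun _ => (L : ℤ)).filter fun ℓ => ∑ i, |ℓ i| ≤ (L : ℤ)

private lemma ker_eq_range_adjoint_orthogonal {F H : Type*}
    [NormedAddCommGroup F] [InnerProductSpace ℂ F] [FiniteDimensional ℂ F]
    [NormedAddCommGroup H] [InnerProductSpace ℂ H] [CompleteSpace H]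
    (A : H →L[ℂ] F) : LinearMap.ker (A : H →ₗ[ℂ] F) = (LinearMap.range (adjoint A : F →ₗ[ℂ] H))ᗮ := by
  ext x
  simp only [LinearMap.mem_ker, Submodule.mem_orthogonal, ContinuousLinearMap.coe_coe]
  constructor
  · rintro h y ⟨u, rfl⟩
    simp [ContinuousLinearMap.adjoint_inner_left, h]
  · intro h
    rw [← inner_self_eq_zero (𝕜 := ℂ) (x := A x)]
    have := h (adjoint A (A x)) ⟨A x, rfl⟩
    rwa [ContinuousLinearMap.adjoint_inner_left] at this

private lemma mem_biSup_range_iff_sum {ι F H : Type*} [DecidableEq ι]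
    [NormedAddCommGroup F] [InnerProductSpace ℂ F]
    [NormedAddCommGroup H] [InnerProductSpace ℂ H]
    (A : ι → F →L[ℂ] H) (s : Finset ι) {x : H}
    (hx : x ∈ ⨆ ℓ ∈ s, LinearMap.range (A ℓ : F →ₗ[ℂ] H)) :
    ∃ u : ι → F, x = ∑ ℓ ∈ s, A ℓ (u ℓ) := by
  induction s using Finset.cons_induction generalizing x with
  | empty => simp only [Finset.notMem_empty, iSup_false, iSup_bot, Submodule.mem_bot] at hx
             exact ⟨0, by simp [hx]⟩
  | cons a s ha ih =>
    rw [← Finset.sup_eq_iSup, Finset.sup_cons, Finset.sup_eq_iSup] at hx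
    rcases Submodule.mem_sup.mp hx with ⟨y, ⟨v, rfl⟩, z, hz, rfl⟩
    rcases ih hz with ⟨u, rfl⟩
    refine ⟨Function.update u a v, ?_⟩
    rw [Finset.sum_cons, Function.update_self]
    congr 1
    exact Finset.sum_congr rfl fun ℓ hℓ => by
      rw [Function.update_of_ne (ne_of_mem_of_not_mem hℓ ha)]

theorem frkhs_reconstruction_from_coefficients
    {d : ℕ} {F H : Type*}
    [NormedAddCommGroup F] [InnerProductSpace ℂ F] [FiniteDimensional ℂ F]
    [NormedAddCommGroup H] [InnerProductSpace ℂ H] [CompleteSpace H]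
    (π : (Fin d → ℤ) → H →L[ℂ] F)
    (hsep : ∀ g : H, (∀ n, π n g = 0) → g = 0) :
    (∀ L : ℕ,
      (⨅ ℓ ∈ intBall d L, LinearMap.ker (π ℓ : H →ₗ[ℂ] F))ᗮ
          = Submodule.span ℂ (⋃ ℓ ∈ intBall d L, Set.range (adjoint (π ℓ))) ∧
        FiniteDimensional ℂ
          (Submodule.span ℂ (⋃ ℓ ∈ intBall d L, Set.range (adjoint (π ℓ))))) ∧
    ∀ f : H, ∃ g : ℕ → H,
      (∀ L, g L ∈ (⨅ ℓ ∈ intBall d L, LinearMap.ker (π ℓ : H →ₗ[ℂ] F))ᗮ ∧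
            f - g L ∈ (⨅ ℓ ∈ intBall d L, LinearMap.ker (π ℓ : H →ₗ[ℂ] F))) ∧
      Tendsto (fun L => ‖g L - f‖) atTop (nhds 0) ∧
      ∀ L : ℕ,
        (∃ u : (Fin d → ℤ) → F,
          ∀ ℓ' ∈ intBall d L, π ℓ' f = ∑ ℓ ∈ intBall d L, π ℓ' (adjoint (π ℓ) (u ℓ))) ∧
        ∀ u : (Fin d → ℤ) → F,
          (∀ ℓ' ∈ intBall d L, π ℓ' f = ∑ ℓ ∈ intBall d L, π ℓ' (adjoint (π ℓ) (u ℓ))) →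
          g L = ∑ ℓ ∈ intBall d L, adjoint (π ℓ) (u ℓ) := by
  classical
  set K : ℕ → Submodule ℂ H := fun L =>
    Submodule.span ℂ (⋃ ℓ ∈ intBall d L, Set.range (adjoint (π ℓ))) with hKdef
  set S : ℕ → Submodule ℂ H := fun L =>
    ⨅ ℓ ∈ intBall d L, LinearMap.ker (π ℓ : H →ₗ[ℂ] F) with hSdef
  -- K L as a bsup of ranges
  have hKsup : ∀ L, K L = ⨆ ℓ ∈ intBall d L, LinearMap.range (adjoint (π ℓ) : F →ₗ[ℂ] H) := by
    intro L
    show Submodule.span ℂ (⋃ ℓ ∈ intBall d L, Set.range (adjoint (π ℓ)))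
        = ⨆ ℓ ∈ intBall d L, LinearMap.range (adjoint (π ℓ) : F →ₗ[ℂ] H)
    rw [Submodule.span_iUnion₂]
    exact iSup_congr fun ℓ => iSup_congr fun _ => by
      rw [← ContinuousLinearMap.coe_coe (adjoint (π ℓ)), ← LinearMap.coe_range, Submodule.span_eq]
  -- S L = (K L)ᗮ
  have hSK : ∀ L, S L = (K L)ᗮ := by
    intro L
    rw [hSdef, hKsup]
    calc (⨅ ℓ ∈ intBall d L, LinearMap.ker (π ℓ : H →ₗ[ℂ] F))
        = ⨅ ℓ ∈ intBall d L, (LinearMap.range (adjoint (π ℓ) : F →ₗ[ℂ] H))ᗮ :=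
          iInf_congr fun ℓ => iInf_congr fun _ => ker_eq_range_adjoint_orthogonal _
      _ = ⨅ ℓ : {ℓ // ℓ ∈ intBall d L}, (LinearMap.range (adjoint (π ℓ.1) : F →ₗ[ℂ] H))ᗮ :=
          (iInf_subtype (p := fun ℓ => ℓ ∈ intBall d L)
            (f := fun ℓ => (LinearMap.range (adjoint (π ℓ.1) : F →ₗ[ℂ] H))ᗮ)).symm
      _ = (⨆ ℓ : {ℓ // ℓ ∈ intBall d L}, LinearMap.range (adjoint (π ℓ.1) : F →ₗ[ℂ] H))ᗮ :=
          Submodule.iInf_orthogonal _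
      _ = (⨆ ℓ ∈ intBall d L, LinearMap.range (adjoint (π ℓ) : F →ₗ[ℂ] H))ᗮ := by
          rw [iSup_subtype (p := fun ℓ => ℓ ∈ intBall d L)]
  -- K L finite dimensional
  have hKfd : ∀ L, FiniteDimensional ℂ (K L) := by
    intro L
    rw [hKsup, ← Finset.sup_eq_iSup]
    infer_instance
  haveI : ∀ L, FiniteDimensional ℂ (K L) := hKfd
  haveI : ∀ L, CompleteSpace (K L) := fun L => FiniteDimensional.complete ℂ _
  -- S Lᗮ = K L
  have hSKo : ∀ L, (S L)ᗮ = K L := fun L => by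
    rw [hSK L, Submodule.orthogonal_orthogonal]
  -- monotonicity of intBall, K
  have hball : ∀ {L L' : ℕ}, L ≤ L' → intBall d L ⊆ intBall d L' := by
    intro L L' h ℓ hℓ
    simp only [intBall, Finset.mem_filter, Finset.mem_Icc, Pi.le_def] at hℓ ⊢
    have hc : (L : ℤ) ≤ (L' : ℤ) := by exact_mod_cast h
    exact ⟨⟨fun i => by linarith [hℓ.1.1 i], fun i => by linarith [hℓ.1.2 i]⟩,
      by linarith [hℓ.2]⟩
  have hKmono : Monotone K := by
    intro L L' h
    rw [hKsup, hKsup]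
    exact iSup_le fun ℓ => iSup_le fun hℓ => le_iSup₂ (f := fun ℓ _ =>
      LinearMap.range (adjoint (π ℓ) : F →ₗ[ℂ] H)) ℓ (hball h hℓ)
  -- the union of the K L is dense
  have hdense : (⨆ L, K L).topologicalClosure = ⊤ := by
    rw [← Submodule.orthogonal_orthogonal_eq_closure]
    have h1 : (⨆ L, K L)ᗮ = ⊥ := by
      rw [← Submodule.iInf_orthogonal]
      rw [eq_bot_iff]
      intro x hx
      simp only [Submodule.mem_iInf] at hx
      refine hsep x fun n => ?_
      set L : ℕ := (∑ i, |n i|).toNat with hL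
      have hsum : (0:ℤ) ≤ ∑ i, |n i| := Finset.sum_nonneg fun i _ => abs_nonneg _
      have hLe : ∑ i, |n i| = (L : ℤ) := by rw [hL, Int.toNat_of_nonneg hsum]
      have hn : n ∈ intBall d L := by
        simp only [intBall, Finset.mem_filter, Finset.mem_Icc, Pi.le_def]
        refine ⟨⟨fun i => ?_, fun i => ?_⟩, le_of_eq hLe⟩
        · have : |n i| ≤ (L : ℤ) := le_trans (Finset.single_le_sum
            (f := fun j => |n j|) (fun j _ => abs_nonneg _) (Finset.mem_univ i)) (le_of_eq hLe)
          linarith [neg_abs_le (n i)]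
        · exact le_trans (le_abs_self _) (le_trans (Finset.single_le_sum
            (f := fun j => |n j|) (fun j _ => abs_nonneg _) (Finset.mem_univ i)) (le_of_eq hLe))
      have := (hSK L) ▸ (hx L)
      rw [hSdef] at this
      simp only [Submodule.mem_iInf] at this
      exact this n hn
    rw [h1, Submodule.bot_orthogonal_eq_top]
  refine ⟨fun L => ⟨hSKo L, hKfd L⟩, fun f => ?_⟩
  -- define g
  set g : ℕ → H := fun L => ((K L).orthogonalProjectionOnto f : H) with hg
  have hgmem : ∀ L, g L ∈ K L := fun L => ((K L).orthogonalProjectionOnto f).2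
  have hfg : ∀ L, f - g L ∈ (K L)ᗮ := fun L => by
    have := Submodule.sub_starProjection_mem_orthogonal (K := K L) f
    rwa [Submodule.starProjection_apply] at this
  refine ⟨g, fun L => ⟨?_, ?_⟩, ?_, ?_⟩
  · show g L ∈ (S L)ᗮ
    rw [hSKo L]; exact hgmem L
  · show f - g L ∈ S L
    rw [hSK L]; exact hfg L
  · -- convergence
    rw [Metric.tendsto_atTop]
    intro ε hε
    have hf : f ∈ (⨆ L, K L).topologicalClosure := hdense ▸ Submodule.mem_top
    rcases Metric.mem_closure_iff.mp hf ε hε with ⟨y, hy, hdy⟩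
    have hy' : y ∈ ⨆ L, K L := hy
    rcases (Submodule.mem_iSup_of_chain ⟨K, hKmono⟩ y).mp hy' with ⟨L₀, hyL₀⟩
    refine ⟨L₀, fun L hL => ?_⟩
    have hyL : y ∈ K L := hKmono hL hyL₀
    -- ‖g L - f‖ ≤ ‖f - y‖ by minimality
    have hmin : ‖f - g L‖ ≤ ‖f - y‖ := by
      rw [hg]
      show ‖f - ((K L).orthogonalProjectionOnto f : H)‖ ≤ _
      rw [← Submodule.starProjection_apply, Submodule.starProjection_minimal]
      exact ciInf_le ⟨0, fun r ⟨x, hx⟩ => hx ▸ norm_nonneg _⟩ (⟨y, hyL⟩ : K L)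
    rw [Real.dist_eq, sub_zero, abs_of_nonneg (norm_nonneg _), norm_sub_rev]
    calc ‖f - g L‖ ≤ ‖f - y‖ := hmin
      _ = dist f y := by rw [dist_eq_norm]
      _ < ε := hdy
  · -- part (iii)
    intro L
    have hrep : ∃ u : (Fin d → ℤ) → F, g L = ∑ ℓ ∈ intBall d L, adjoint (π ℓ) (u ℓ) := by
      refine mem_biSup_range_iff_sum (fun ℓ => adjoint (π ℓ)) (intBall d L) ?_
      rw [← hKsup]; exact hgmem L
    have hSker : ∀ x, x ∈ S L → ∀ ℓ' ∈ intBall d L, π ℓ' x = 0 := by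
      intro x hx ℓ' hℓ'
      rw [hSdef] at hx
      simp only [Submodule.mem_iInf] at hx
      exact hx ℓ' hℓ'
    constructor
    · rcases hrep with ⟨u, hu⟩
      refine ⟨u, fun ℓ' hℓ' => ?_⟩
      have hmem : f - g L ∈ S L := by rw [hSK L]; exact hfg L
      have h0 : π ℓ' (f - g L) = 0 := hSker _ hmem ℓ' hℓ'
      rw [map_sub, sub_eq_zero] at h0
      rw [h0, hu, map_sum]
    · intro u hu
      set h : H := ∑ ℓ ∈ intBall d L, adjoint (π ℓ) (u ℓ) with hh
      have hhK : h ∈ K L := by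
        rw [hKsup]
        exact Submodule.sum_mem _ fun ℓ hℓ =>
          Submodule.mem_iSup_of_mem ℓ (Submodule.mem_iSup_of_mem hℓ ⟨u ℓ, rfl⟩)
      have hfh : f - h ∈ (K L)ᗮ := by
        rw [← hSK]
        rw [hSdef]
        simp only [Submodule.mem_iInf]
        intro ℓ' hℓ'
        rw [LinearMap.mem_ker]
        have := hu ℓ' hℓ'
        rw [ContinuousLinearMap.coe_coe, map_sub, hh, map_sum, this, sub_self]
      have hdiff : g L - h ∈ K L ⊓ (K L)ᗮ :=
        ⟨Submodule.sub_mem _ (hgmem L) hhK,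
         by have heq : g L - h = (f - h) - (f - g L) := by abel
            rw [heq]; exact Submodule.sub_mem _ hfh (hfg L)⟩
      rw [Submodule.inf_orthogonal_eq_bot, Submodule.mem_bot] at hdiff
      exact sub_eq_zero.mp hdiff
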